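/- The pignistic transform of m equals the pignistic transform of its fractal-based BPA m_F: BetP_{m_F}(θ) = BetP_m(θ) for every θ. -/
import Mathlib


open Finset Real Filter

/-- A basic probability assignment on the power set of a finite frame `Θ`. -/
noncomputable def IsBPA {Θ : Type*} [Fintype Θ] [DecidableEq Θ] (m : Finset Θ → ℝ) : Prop :=
  m ∅ = 0 ∧ (∀ F, 0 ≤ m F) ∧ ∑ F : Finset Θ, m F = 1

/-- The fractal-based basic probability assignment:
`m_F(F) = m(F)/(2^|F|-1) + Σ_{F ⊊ G} m(G)/(2^|G|-1)`. -/
noncomputable def mF {Θ : Type*} [Fintype Θ] [DecidableEq Θ] (m : Finset Θ → ℝ) (F : Finset Θ) : ℝ :=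
  m F / ((2 : ℝ) ^ F.card - 1) +
    ∑ G ∈ Finset.univ.filter (fun G : Finset Θ => F ⊂ G), m G / ((2 : ℝ) ^ G.card - 1)

/-- Fractal-based belief entropy: Shannon entropy of `m_F` over nonempty subsets. -/
noncomputable def EFB {Θ : Type*} [Fintype Θ] [DecidableEq Θ] (m : Finset Θ → ℝ) : ℝ :=
  ∑ F ∈ Finset.univ.filter (fun F : Finset Θ => F.Nonempty), Real.negMulLog (mF m F)

/-- Pignistic probability transformation: `BetP(θ) = Σ_{θ ∈ F} m(F)/|F|`. -/
noncomputable def BetP {Θ : Type*} [Fintype Θ] [DecidableEq Θ] (m : Finset Θ → ℝ) (θ : Θ) : ℝ :=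
  ∑ F ∈ Finset.univ.filter (fun F : Finset Θ => θ ∈ F), m F / (F.card : ℝ)

/-- Plausibility of a singleton: `Pl(θ) = Σ_{θ ∈ F} m(F)`. -/
noncomputable def Pl {Θ : Type*} [Fintype Θ] [DecidableEq Θ] (m : Finset Θ → ℝ) (θ : Θ) : ℝ :=
  ∑ F ∈ Finset.univ.filter (fun F : Finset Θ => θ ∈ F), m F


section AuxBetP

open Finset

private lemma sum_inv_card_powerset' {α : Type*} [DecidableEq α] (s : Finset α) :
    ∑ t ∈ s.powerset, (1:ℝ)/(t.card+1) = ((2:ℝ)^(s.card+1) - 1)/(s.card+1) := by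
  rw [Finset.sum_powerset]
  have h1 : ∀ j ∈ Finset.range (s.card + 1),
      ∑ t ∈ Finset.powersetCard j s, (1:ℝ)/(t.card+1)
        = (s.card.choose j : ℝ)/(j+1) := by
    intro j hj
    rw [Finset.sum_congr rfl (fun t ht => by
      rw [(Finset.mem_powersetCard.mp ht).2]), Finset.sum_const,
      Finset.card_powersetCard, nsmul_eq_mul]
    ring
  rw [Finset.sum_congr rfl h1]
  have h2 : ∀ j ∈ Finset.range (s.card + 1),
      (s.card.choose j : ℝ)/(j+1) = ((s.card+1).choose (j+1) : ℝ)/(s.card+1) := by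
    intro j hj
    have := Nat.add_one_mul_choose_eq s.card j
    have h : ((s.card+1) * s.card.choose j : ℝ) = ((s.card+1).choose (j+1) * (j+1) : ℝ) := by
      exact_mod_cast congrArg (Nat.cast : ℕ → ℝ) this
    have hj1 : (j:ℝ)+1 ≠ 0 := by positivity
    have hn1 : (s.card:ℝ)+1 ≠ 0 := by positivity
    field_simp
    linarith [h]
  rw [Finset.sum_congr rfl h2, ← Finset.sum_div]
  congr 1
  have h3 : ∑ j ∈ Finset.range (s.card + 2), ((s.card+1).choose j : ℝ) = (2:ℝ)^(s.card+1) := by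
    exact_mod_cast congrArg (Nat.cast : ℕ → ℝ) (Nat.sum_range_choose (s.card+1))
  rw [Finset.sum_range_succ'] at h3
  simp at h3
  linarith

private lemma sum_inv_card_filter' {Θ : Type*} [Fintype Θ] [DecidableEq Θ] (θ : Θ) (G : Finset Θ)
    (hθ : θ ∈ G) :
    ∑ F ∈ Finset.univ.filter (fun F => θ ∈ F ∧ F ⊆ G), (1:ℝ)/F.card
      = ((2:ℝ)^G.card - 1)/G.card := by
  have hcard : (G.erase θ).card + 1 = G.card := Finset.card_erase_add_one hθ
  have step : ∑ F ∈ Finset.univ.filter (fun F => θ ∈ F ∧ F ⊆ G), (1:ℝ)/F.card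
      = ∑ t ∈ (G.erase θ).powerset, (1:ℝ)/(t.card+1) := by
    refine Finset.sum_bij' (fun F _ => F.erase θ) (fun t _ => insert θ t) ?hi ?hj ?li ?ri ?hv
    case hi =>
      intro F hF
      rw [Finset.mem_filter] at hF
      exact Finset.mem_powerset.mpr (Finset.erase_subset_erase θ hF.2.2)
    case hj =>
      intro t ht
      rw [Finset.mem_powerset] at ht
      refine Finset.mem_filter.mpr ⟨Finset.mem_univ _, Finset.mem_insert_self _ _, ?_⟩
      exact Finset.insert_subset hθ (ht.trans (Finset.erase_subset _ _))
    case li =>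
      intro F hF
      rw [Finset.mem_filter] at hF
      exact Finset.insert_erase hF.2.1
    case ri =>
      intro t ht
      rw [Finset.mem_powerset] at ht
      exact Finset.erase_insert (fun h => Finset.notMem_erase θ G (ht h))
    case hv =>
      intro F hF
      rw [Finset.mem_filter] at hF
      rw [← Finset.card_erase_add_one hF.2.1]
      push_cast
      ring
  rw [step, sum_inv_card_powerset', hcard]
  have : ((G.erase θ).card : ℝ) + 1 = (G.card : ℝ) := by exact_mod_cast hcard
  rw [this]

private lemma mF_eq' {Θ : Type*} [Fintype Θ] [DecidableEq Θ] (m : Finset Θ → ℝ) (F : Finset Θ) :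
    mF m F = ∑ G ∈ Finset.univ.filter (fun G => F ⊆ G), m G / ((2:ℝ)^G.card - 1) := by
  have hset : Finset.univ.filter (fun G : Finset Θ => F ⊆ G)
      = insert F (Finset.univ.filter (fun G => F ⊂ G)) := by
    ext G
    simp only [Finset.mem_filter, Finset.mem_univ, true_and, Finset.mem_insert]
    constructor
    · intro h
      rcases eq_or_ne G F with h' | h'
      · exact Or.inl h'
      · exact Or.inr (Finset.ssubset_iff_subset_ne.mpr ⟨h, fun hh => h' hh.symm⟩)
    · rintro (rfl | h)
      · exact Finset.Subset.refl _
      · exact h.subset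
  rw [hset, Finset.sum_insert (by simp [ssubset_irrefl])]
  rfl

end AuxBetP

theorem betP_mF_eq_betP {Θ : Type*} [Fintype Θ] [DecidableEq Θ] [Nonempty Θ]
    (m : Finset Θ → ℝ) (hm : IsBPA m) :
    ∀ θ : Θ, BetP (mF m) θ = BetP m θ := by
  intro θ
  calc BetP (mF m) θ
      = ∑ F ∈ Finset.univ.filter (fun F : Finset Θ => θ ∈ F),
          ∑ G ∈ Finset.univ, (if F ⊆ G then (m G / ((2:ℝ)^G.card - 1)) / F.card else 0) := by
        unfold BetP
        refine Finset.sum_congr rfl fun F _ => ?_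
        rw [mF_eq', Finset.sum_div, Finset.sum_filter]
    _ = ∑ G ∈ Finset.univ, ∑ F ∈ Finset.univ.filter (fun F : Finset Θ => θ ∈ F),
          (if F ⊆ G then (m G / ((2:ℝ)^G.card - 1)) / F.card else 0) := Finset.sum_comm
    _ = ∑ G ∈ Finset.univ, (if θ ∈ G then m G / (G.card : ℝ) else 0) := by
        refine Finset.sum_congr rfl fun G _ => ?_
        rw [← Finset.sum_filter, Finset.filter_filter]
        by_cases hθG : θ ∈ G
        · rw [if_pos hθG]
          have h1 : ∀ F ∈ Finset.univ.filter (fun F : Finset Θ => θ ∈ F ∧ F ⊆ G),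
              (m G / ((2:ℝ)^G.card - 1)) / F.card
                = (m G / ((2:ℝ)^G.card - 1)) * ((1:ℝ)/F.card) := by
            intro F _; ring
          rw [Finset.sum_congr rfl h1, ← Finset.mul_sum, sum_inv_card_filter' θ G hθG]
          have hG : G.Nonempty := ⟨θ, hθG⟩
          have hGc : 0 < G.card := Finset.card_pos.mpr hG
          have h2 : ((2:ℝ)^G.card - 1) ≠ 0 := by
            have : (2:ℝ)^G.card ≥ 2^1 := by
              apply pow_le_pow_right₀ (by norm_num) hGc
            simp at this; nlinarith
          have h3 : (G.card : ℝ) ≠ 0 := by positivity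
          field_simp
        · rw [if_neg hθG]
          apply Finset.sum_eq_zero
          intro F hF
          rw [Finset.mem_filter] at hF
          exact absurd (hF.2.2 hF.2.1) hθG
    _ = BetP m θ := by rw [BetP, Finset.sum_filter]
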